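/- Let K be a field of characteristic zero, k a positive even integer, n > k/2, and M = K(ℤ, 2n). Then the composition δ^∨ ∘ μ^∨ of the duals of the S^k-brane product and coproduct (computed on Sullivan models as above) satisfies (δ^∨ ∘ μ^∨)(sx) = −s^{k-1}x ≠ 0; in particular the composition μ_{S^k} ∘ δ_{S^k} of the S^k-brane product and S^k-brane coproduct on homology is nontrivial. -/

import Mathlib

noncomputable section
namespace Brane

/-- The monomial in a generator family indexed by a list. -/
def mon {A G : Type} [Ring A] (gen : G → A) (l : List G) : A := (l.map gen).prod

/-- The degree-`m` component: the `K`-span of monomials of total degree `m`. -/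
def grading (K : Type) {A G : Type} [Field K] [Ring A] [Algebra K A]
    (gen : G → A) (dg : G → ℤ) (m : ℤ) : Submodule K A :=
  Submodule.span K {a : A | ∃ l : List G, (l.map dg).sum = m ∧ a = mon gen l}

/-- Graded commutativity on generators (Koszul signs). -/
def GradedComm (K : Type) {A G : Type} [Field K] [Ring A] [Algebra K A]
    (gen : G → A) (dg : G → ℤ) : Prop :=
  ∀ i j, gen i * gen j = ((-1 : K) ^ (dg i * dg j)) • (gen j * gen i)

/-- `A` is the free graded-commutative algebra on the generators: the reduced sorted
monomials (odd generators appearing at most once) form a `K`-basis. -/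
def IsFreeGCAOn (K : Type) {A G : Type} [Field K] [Ring A] [Algebra K A] [LinearOrder G]
    (gen : G → A) (dg : G → ℤ) : Prop :=
  ∃ b : Module.Basis {l : List G // l.Pairwise (· ≤ ·) ∧ ∀ g, Odd (dg g) → l.count g ≤ 1} K A,
    ∀ l, b l = mon gen l.1

/-- A graded `K`-linear derivation of degree `r` (Koszul sign rule). -/
def IsGradedDer (K : Type) {A G : Type} [Field K] [Ring A] [Algebra K A]
    (gen : G → A) (dg : G → ℤ) (r : ℤ) (D : A →ₗ[K] A) : Prop :=
  (∀ (i : ℤ) (a : A), a ∈ grading K gen dg i → D a ∈ grading K gen dg (i + r)) ∧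
  (∀ (i : ℤ) (a b : A), a ∈ grading K gen dg i →
    D (a * b) = D a * b + ((-1 : K) ^ (r * i)) • (a * D b))

/-- A differential: a graded derivation of degree `1` squaring to zero. -/
def IsDifferential (K : Type) {A G : Type} [Field K] [Ring A] [Algebra K A]
    (gen : G → A) (dg : G → ℤ) (D : A →ₗ[K] A) : Prop :=
  IsGradedDer K gen dg 1 D ∧ ∀ a, D (D a) = 0

/-- The Sullivan (nilpotence) condition. -/
def SullivanCond (K : Type) {A G : Type} [Field K] [Ring A] [Algebra K A]
    (gen : G → A) (D : A →ₗ[K] A) : Prop :=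
  ∃ w : G → ℕ, ∀ g, D (gen g) ∈ Algebra.adjoin K (gen '' {g' | w g' < w g})

/-- Decomposable elements (span of monomials of length at least two). -/
def decomposables (K : Type) {A G : Type} [Field K] [Ring A] [Algebra K A]
    (gen : G → A) : Submodule K A :=
  Submodule.span K {a : A | ∃ l : List G, 2 ≤ l.length ∧ a = mon gen l}


/-- Let `K` be a field of characteristic zero, `k` a positive even
integer, `n > k/2`, and `M = K(ℤ, 2n)`.  With `M(T) = ∧x ⊗ ∧s^{k-1}x ⊗ ∧sx ⊗ ∧ss^{k-1}x`
(zero differential) the model of `map(S^{k-1}×S^1, M)` and `M(S^k) = ∧x ⊗ ∧s^kx` the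
model of `map(S^k, M)`, the composition `δ^∨ ∘ μ^∨` of the duals of the `S^k`-brane
product and coproduct — where `δ^∨(α) = s^{k-1}x · ι(α)` with `ι(x) = x`,
`ι(s^kx) = ss^{k-1}x`, and `μ^∨(β) = 0`, `μ^∨(sx·β) = −ρ(β)`,
`μ^∨(s^{k-1}x·β) = μ^∨(sx·s^{k-1}x·β) = 0` for `β ∈ ∧x ⊗ ∧ss^{k-1}x`, with `ρ(x) = x`,
`ρ(ss^{k-1}x) = s^kx` — satisfies `(δ^∨ ∘ μ^∨)(sx) = −s^{k-1}x ≠ 0`; in particular the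
composition `μ_{S^k} ∘ δ_{S^k}` (this composition on the models, the differentials being
zero so that they compute the operations on (co)homology) is nontrivial. -/
theorem brane_prod_coprod_composition_nontrivial
    (K Sk T E : Type) [Field K] [CharZero K]
    [Ring Sk] [Algebra K Sk] [Ring T] [Algebra K T] [Ring E] [Algebra K E]
    [LinearOrder (Fin 2)] [LinearOrder (Fin 2 ⊕ Fin 2)]
    (n k : ℕ) (hk : 0 < k) (hkeven : Even k) (hnk : k < 2 * n)
    -- M(S^k) = ∧x ⊗ ∧s^kx
    (sk : Fin 2 → Sk) (hSkfree : IsFreeGCAOn K sk ![(2 * n : ℤ), 2 * n - k])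
    (hSkcomm : GradedComm K sk ![(2 * n : ℤ), 2 * n - k])
    -- M(T): even generators inl 0 = x, inl 1 = ss^{k-1}x; odd inr 0 = s^{k-1}x, inr 1 = sx
    (t : Fin 2 ⊕ Fin 2 → T)
    (hTfree : IsFreeGCAOn K t (Sum.elim ![(2 * n : ℤ), 2 * n - k] ![2 * n - k + 1, 2 * n - 1]))
    (hTcomm : GradedComm K t (Sum.elim ![(2 * n : ℤ), 2 * n - k] ![2 * n - k + 1, 2 * n - 1]))
    -- the even part E = ∧x ⊗ ∧ss^{k-1}x, its embedding jE into M(T), and ρ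
    (e : Fin 2 → E) (hEfree : IsFreeGCAOn K e ![(2 * n : ℤ), 2 * n - k])
    (hEcomm : GradedComm K e ![(2 * n : ℤ), 2 * n - k])
    (jE : E →ₐ[K] T) (hjE1 : jE (e 0) = t (Sum.inl 0)) (hjE2 : jE (e 1) = t (Sum.inl 1))
    (ρ : E →ₐ[K] Sk) (hρ1 : ρ (e 0) = sk 0) (hρ2 : ρ (e 1) = sk 1)
    -- ι : M(S^k) → M(T), x ↦ x, s^kx ↦ ss^{k-1}x, and the coproduct dual δ^∨
    (ι : Sk →ₐ[K] T) (hι1 : ι (sk 0) = t (Sum.inl 0)) (hι2 : ι (sk 1) = t (Sum.inl 1))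
    (δ : Sk →ₗ[K] T) (hδ : ∀ α : Sk, δ α = t (Sum.inr 0) * ι α)
    -- the product dual μ^∨
    (μ : T →ₗ[K] Sk)
    (hμ0 : ∀ β : E, μ (jE β) = 0)
    (hμb : ∀ β : E, μ (t (Sum.inr 1) * jE β) = - ρ β)
    (hμa : ∀ β : E, μ (t (Sum.inr 0) * jE β) = 0)
    (hμab : ∀ β : E, μ (t (Sum.inr 1) * (t (Sum.inr 0) * jE β)) = 0) :
    δ (μ (t (Sum.inr 1))) = - t (Sum.inr 0) ∧ t (Sum.inr 0) ≠ 0 ∧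
      ∃ z : T, δ (μ z) ≠ 0 := by
  have h1 : μ (t (Sum.inr 1)) = -1 := by
    have := hμb 1
    simpa using this
  have h2 : δ (μ (t (Sum.inr 1))) = - t (Sum.inr 0) := by
    rw [h1, map_neg, hδ, map_one, mul_one]
  have h3 : t (Sum.inr 0) ≠ 0 := by
    obtain ⟨b, hb⟩ := hTfree
    have hne := b.ne_zero ⟨[Sum.inr 0], List.pairwise_singleton _ _,
      fun g _ => le_trans (@List.count_le_length _ (@instBEqOfDecidableEq _ LinearOrder.toDecidableEq) g [Sum.inr 0]) (by simp)⟩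
    rw [hb] at hne
    simpa [mon] using hne
  refine ⟨h2, h3, ⟨t (Sum.inr 1), ?_⟩⟩
  rw [h2]
  simpa using h3

end Brane
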